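/- Let Q be a finite acyclic quiver, V a rank-one representation of Q over ℂ (with V(a)(u) = f_a(u)·v_a, v_a ≠ 0, f_a ≠ 0), and σ : Q₀ → ℤ a weight. If V is σ-semistable in the sense of King's criterion, i.e., σ(dim V) = 0 and σ(dim W) ≤ 0 for every subrepresentation W of V, then: (K1) Σ_{i∈Q₀} σ⁺(i)·dim V(i) = Σ_{i∈Q₀} σ⁻(i)·dim V(i), and (F) for every vertex i with σ(i) > 0 the functionals {f_a : ta = i} span V(i)^*, and for every vertex i with σ(i) < 0 the vectors {v_a : ha = i} span V(i). -/

import Mathlib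

/-- A list of arcs (with tail map `tl` and head map `hd`) forms a directed closed walk. -/
def IsClosedWalk {I A : Type} (tl hd : A → I) (l : List A) (hne : l ≠ []) : Prop :=
  l.Chain' (fun a b => hd a = tl b) ∧ hd (l.getLast hne) = tl (l.head hne)

/-- A quiver is acyclic if it has no directed closed walk. -/
def IsAcyclic {I A : Type} (tl hd : A → I) : Prop :=
  ∀ (l : List A) (hne : l ≠ []), ¬ IsClosedWalk tl hd l hne

/-- The functional `f_a`, viewed in the dual of `Vv i` when `tl a = i` (and `0` otherwise). -/
noncomputable def dualAt {I A : Type} [DecidableEq I] {Vv : I → Type}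
    [∀ i, AddCommGroup (Vv i)] [∀ i, Module ℂ (Vv i)] (tl : A → I)
    (f : ∀ a : A, Vv (tl a) →ₗ[ℂ] ℂ) (i : I) (a : A) : Vv i →ₗ[ℂ] ℂ :=
  if e : tl a = i then cast (congrArg (fun j => Vv j →ₗ[ℂ] ℂ) e) (f a) else 0

/-- The vector `v_a`, viewed in `Vv i` when `hd a = i` (and `0` otherwise). -/
noncomputable def vecAt {I A : Type} [DecidableEq I] {Vv : I → Type}
    [∀ i, AddCommGroup (Vv i)] (hd : A → I)
    (v : ∀ a : A, Vv (hd a)) (i : I) (a : A) : Vv i :=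
  if e : hd a = i then cast (congrArg Vv e) (v a) else 0

/-- Auxiliary: a family of submodules that is `S` at `i` and `dflt` elsewhere. -/
noncomputable def WAt {I : Type} [DecidableEq I] {Vv : I → Type}
    [∀ i, AddCommGroup (Vv i)] [∀ i, Module ℂ (Vv i)] (i : I) (S : Submodule ℂ (Vv i))
    (dflt : ∀ j, Submodule ℂ (Vv j)) : ∀ j, Submodule ℂ (Vv j) :=
  fun j => if h : i = j then h ▸ S else dflt j

lemma WAt_self {I : Type} [DecidableEq I] {Vv : I → Type}
    [∀ i, AddCommGroup (Vv i)] [∀ i, Module ℂ (Vv i)] (i : I) (S : Submodule ℂ (Vv i))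
    (dflt : ∀ j, Submodule ℂ (Vv j)) : WAt i S dflt i = S := by
  show (if h : i = i then h ▸ S else dflt i) = S
  rw [dif_pos rfl]

lemma WAt_ne {I : Type} [DecidableEq I] {Vv : I → Type}
    [∀ i, AddCommGroup (Vv i)] [∀ i, Module ℂ (Vv i)] {i j : I} (h : i ≠ j)
    (S : Submodule ℂ (Vv i)) (dflt : ∀ j, Submodule ℂ (Vv j)) : WAt i S dflt j = dflt j :=
  dif_neg h

/-- If a proper subspace of the dual, there is a nonzero vector killed by all of it. -/
lemma exists_nonzero_of_ne_top {V : Type} [AddCommGroup V] [Module ℂ V]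
    [FiniteDimensional ℂ V] (Φ : Submodule ℂ (Module.Dual ℂ V)) (h : Φ ≠ ⊤) :
    ∃ u : V, u ≠ 0 ∧ ∀ φ ∈ Φ, φ u = 0 := by
  by_contra hc
  push_neg at hc
  have hbot : Φ.dualCoannihilator = ⊥ := by
    rw [Submodule.eq_bot_iff]
    intro u hu
    by_contra h0
    obtain ⟨φ, hφ, hne⟩ := hc u h0
    exact hne ((Submodule.mem_dualCoannihilator u).mp hu φ hφ)
  have h1 := Subspace.finrank_add_finrank_dualCoannihilator_eq Φ
  rw [hbot, finrank_bot, add_zero] at h1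
  exact h (Submodule.eq_top_of_finrank_eq (by rw [h1, Subspace.dual_finrank_eq]))

/-- If a rank-one representation is `σ`-semistable (in the sense of King's criterion),
then (K1) `Σ_i σ⁺(i)·dim V(i) = Σ_i σ⁻(i)·dim V(i)`, and (F) the functionals
`{f_a : ta = i}` span `V(i)^*` whenever `σ(i) > 0`, and the vectors `{v_a : ha = i}`
span `V(i)` whenever `σ(i) < 0`. -/
theorem rank_one_semistable_necessary
    {I A : Type} [Fintype I] [Fintype A] [DecidableEq I]
    (tl hd : A → I) (hacyc : IsAcyclic tl hd)
    (Vv : I → Type) [∀ i, AddCommGroup (Vv i)] [∀ i, Module ℂ (Vv i)]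
    [∀ i, FiniteDimensional ℂ (Vv i)]
    (f : ∀ a : A, Vv (tl a) →ₗ[ℂ] ℂ) (v : ∀ a : A, Vv (hd a))
    (hf : ∀ a : A, f a ≠ 0) (hv : ∀ a : A, v a ≠ 0)
    (σ : I → ℤ)
    (hss : (∑ i : I, σ i * (Module.finrank ℂ (Vv i) : ℤ)) = 0 ∧
      ∀ W : ∀ i, Submodule ℂ (Vv i),
        (∀ a : A, (W (tl a)).map ((f a).smulRight (v a)) ≤ W (hd a)) →
        (∑ i : I, σ i * (Module.finrank ℂ (W i) : ℤ)) ≤ 0) :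
    ((∑ i : I, max (σ i) 0 * (Module.finrank ℂ (Vv i) : ℤ)) =
        (∑ i : I, max (-σ i) 0 * (Module.finrank ℂ (Vv i) : ℤ))) ∧
    (∀ i : I, 0 < σ i →
      Submodule.span ℂ (dualAt tl f i '' {a : A | tl a = i}) = ⊤) ∧
    (∀ i : I, σ i < 0 →
      Submodule.span ℂ (vecAt hd v i '' {a : A | hd a = i}) = ⊤) := by
  obtain ⟨hK, hW⟩ := hss
  refine ⟨?_, ?_, ?_⟩
  · have h : ∑ i : I, (max (σ i) 0 * (Module.finrank ℂ (Vv i) : ℤ) -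
        max (-σ i) 0 * (Module.finrank ℂ (Vv i) : ℤ)) = 0 := by
      rw [← hK]
      refine Finset.sum_congr rfl fun i _ => ?_
      rw [← sub_mul]
      congr 1
      omega
    rw [Finset.sum_sub_distrib, sub_eq_zero] at h
    exact h
  · intro i hi
    by_contra hspan
    obtain ⟨u, hu0, hu⟩ := exists_nonzero_of_ne_top _ hspan
    have hinv : ∀ a : A,
        ((WAt i (ℂ ∙ u) (fun _ => ⊥) : ∀ j, Submodule ℂ (Vv j)) (tl a)).map
          ((f a).smulRight (v a)) ≤ WAt i (ℂ ∙ u) (fun _ => ⊥) (hd a) := by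
      intro a
      by_cases e : i = tl a
      · subst e
        rw [WAt_self]
        have hfa : f a u = 0 := by
          have hmem : dualAt tl f (tl a) a ∈
              Submodule.span ℂ (dualAt tl f (tl a) '' {a' : A | tl a' = tl a}) :=
            Submodule.subset_span ⟨a, rfl, rfl⟩
          have := hu _ hmem
          simpa [dualAt] using this
        rintro x ⟨w, hw, rfl⟩
        obtain ⟨c, rfl⟩ := Submodule.mem_span_singleton.mp hw
        have : ((f a).smulRight (v a)) (c • u) = 0 := by
          simp [LinearMap.smulRight_apply, hfa]
        rw [this]
        exact Submodule.zero_mem _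
      · rw [WAt_ne e]
        simp
    have hle := hW _ hinv
    have hsum : ∑ j : I, σ j *
        (Module.finrank ℂ ((WAt i (ℂ ∙ u) (fun _ => ⊥) : ∀ j, Submodule ℂ (Vv j)) j) : ℤ)
        = σ i := by
      rw [Finset.sum_eq_single_of_mem i (Finset.mem_univ i)]
      · rw [WAt_self, finrank_span_singleton hu0]
        ring
      · intro j _ hj
        rw [WAt_ne (Ne.symm hj)]
        simp
    rw [hsum] at hle
    omega
  · intro i hi
    by_contra hspan
    have hinv : ∀ a : A,
        ((WAt i (Submodule.span ℂ (vecAt hd v i '' {a : A | hd a = i})) (fun _ => ⊤) :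
          ∀ j, Submodule ℂ (Vv j)) (tl a)).map ((f a).smulRight (v a)) ≤
        WAt i (Submodule.span ℂ (vecAt hd v i '' {a : A | hd a = i})) (fun _ => ⊤) (hd a) := by
      intro a
      by_cases e : i = hd a
      · subst e
        rw [WAt_self]
        have hva : v a ∈ Submodule.span ℂ (vecAt hd v (hd a) '' {a' : A | hd a' = hd a}) := by
          refine Submodule.subset_span ⟨a, rfl, ?_⟩
          simp [vecAt]
        rintro x ⟨w, hw, rfl⟩
        rw [LinearMap.smulRight_apply]
        exact Submodule.smul_mem _ _ hva
      · rw [WAt_ne e]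
        exact le_top
    have hle := hW _ hinv
    have hd1 : ∑ j : I, (σ j * (Module.finrank ℂ (Vv j) : ℤ) -
        σ j * (Module.finrank ℂ
          ((WAt i (Submodule.span ℂ (vecAt hd v i '' {a : A | hd a = i})) (fun _ => ⊤) :
            ∀ j, Submodule ℂ (Vv j)) j) : ℤ)) =
        σ i * ((Module.finrank ℂ (Vv i) : ℤ) -
          (Module.finrank ℂ (Submodule.span ℂ (vecAt hd v i '' {a : A | hd a = i})) : ℤ)) := by
      rw [Finset.sum_eq_single_of_mem i (Finset.mem_univ i)]
      · rw [WAt_self]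
        ring
      · intro j _ hj
        rw [WAt_ne (Ne.symm hj)]
        simp [finrank_top]
    rw [Finset.sum_sub_distrib, hK, zero_sub] at hd1
    have hlt : (Module.finrank ℂ (Submodule.span ℂ (vecAt hd v i '' {a : A | hd a = i})) : ℤ) <
        (Module.finrank ℂ (Vv i) : ℤ) := by
      exact_mod_cast Submodule.finrank_lt hspan
    have hneg : σ i * ((Module.finrank ℂ (Vv i) : ℤ) -
        (Module.finrank ℂ (Submodule.span ℂ (vecAt hd v i '' {a : A | hd a = i})) : ℤ)) < 0 :=
      mul_neg_of_neg_of_pos hi (by linarith)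
    linarith
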